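/- Let f : [-1,1] → [-1,1] satisfy f(x) = ∑_{k≥0} d_k x^k with d_k ≥ 0 for all k, the series converging on [-1,1], and f(1) = 1. Then for any n ≥ 1 there exists a map C from the unit sphere S^{n-1} ⊂ R^n into the unit sphere of a real Hilbert space H such that ⟨C(a), C(b)⟩ = f(⟨a,b⟩) for all unit vectors a, b ∈ S^{n-1}. -/

import Mathlib

open Real Set

noncomputable section

/-- The `k`-th tensor power of a vector, realized concretely as a function on `Fin k → Fin n`. -/
def tpow (n k : ℕ) (v : EuclideanSpace ℝ (Fin n)) :
    EuclideanSpace ℝ (Fin k → Fin n) :=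
  WithLp.toLp 2 (fun i => ∏ j, v (i j))

lemma inner_tpow (n k : ℕ) (v w : EuclideanSpace ℝ (Fin n)) :
    (inner ℝ (tpow n k v) (tpow n k w) : ℝ) = (inner ℝ v w : ℝ) ^ k := by
  simp only [PiLp.inner_apply, RCLike.inner_apply, conj_trivial, tpow]
  have : ((∑ m, w m * v m) : ℝ) ^ k = ∏ _j : Fin k, ∑ m, w m * v m := by simp
  rw [this, Finset.prod_univ_sum, Fintype.piFinset_univ]
  congr 1; ext p
  rw [← Finset.prod_mul_distrib]

/-- If f : [-1,1] → [-1,1] is given by a power series ∑ d_k x^k with nonnegative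
coefficients converging on [-1,1] and f(1) = 1, then for any n ≥ 1 there is a map C
from the unit sphere of ℝⁿ into the unit sphere of some real Hilbert space H with
⟨C(a), C(b)⟩ = f(⟨a,b⟩) for all unit vectors a, b. -/
theorem stmt_10 (f : ℝ → ℝ) (d : ℕ → ℝ)
    (hmap : MapsTo f (Icc (-1 : ℝ) 1) (Icc (-1 : ℝ) 1))
    (hd : ∀ k, 0 ≤ d k)
    (hsum : ∀ x ∈ Icc (-1 : ℝ) 1, HasSum (fun k : ℕ => d k * x ^ k) (f x))
    (hf1 : f 1 = 1)
    (n : ℕ) (hn : 1 ≤ n) :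
    ∃ (H : Type) (_ : NormedAddCommGroup H) (_ : InnerProductSpace ℝ H)
      (_ : CompleteSpace H) (C : EuclideanSpace ℝ (Fin n) → H),
      ∀ a b : EuclideanSpace ℝ (Fin n), ‖a‖ = 1 → ‖b‖ = 1 →
        ‖C a‖ = 1 ∧ (inner ℝ (C a) (C b) : ℝ) = f (inner ℝ a b) := by
  classical
  set E : ℕ → Type := fun k => EuclideanSpace ℝ (Fin k → Fin n) with hE
  -- the candidate pre-lp family
  set x : EuclideanSpace ℝ (Fin n) → ∀ k, E k :=
    fun v k => (Real.sqrt (d k)) • tpow n k v with hx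
  have hd1 : HasSum d 1 := by
    have := hsum 1 (by norm_num)
    simpa [hf1] using this
  have hTnorm : ∀ (k : ℕ) (v : EuclideanSpace ℝ (Fin n)), ‖v‖ = 1 →
      ‖tpow n k v‖ = 1 := by
    intro k v hv
    have h1 : (inner ℝ (tpow n k v) (tpow n k v) : ℝ) = 1 := by
      rw [inner_tpow, real_inner_self_eq_norm_sq, hv]; norm_num
    have h2 : ‖tpow n k v‖ ^ 2 = 1 := by
      rw [← real_inner_self_eq_norm_sq, h1]
    nlinarith [norm_nonneg (tpow n k v)]
  have hxnorm : ∀ (k : ℕ) (v : EuclideanSpace ℝ (Fin n)), ‖v‖ = 1 →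
      ‖x v k‖ = Real.sqrt (d k) := by
    intro k v hv
    simp [hx, norm_smul, hTnorm k v hv, abs_of_nonneg (Real.sqrt_nonneg _)]
  have hmem : ∀ v : EuclideanSpace ℝ (Fin n), ‖v‖ = 1 → Memℓp (x v) 2 := by
    intro v hv
    apply memℓp_gen
    have : (fun k => ‖x v k‖ ^ (2 : ENNReal).toReal) = d := by
      funext k
      rw [hxnorm k v hv]
      rw [ENNReal.toReal_ofNat, Real.rpow_two, Real.sq_sqrt (hd k)]
    rw [this]
    exact hd1.summable
  set C : EuclideanSpace ℝ (Fin n) → lp E 2 :=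
    fun v => if h : ‖v‖ = 1 then ⟨x v, hmem v h⟩ else 0 with hC
  refine ⟨lp E 2, inferInstance, inferInstance, inferInstance, C, ?_⟩
  have key : ∀ a b : EuclideanSpace ℝ (Fin n), ‖a‖ = 1 → ‖b‖ = 1 →
      (inner ℝ (C a) (C b) : ℝ) = f (inner ℝ a b) := by
    intro a b ha hb
    have hab : (inner ℝ a b : ℝ) ∈ Icc (-1 : ℝ) 1 := by
      constructor
      · have := neg_le_of_abs_le (abs_real_inner_le_norm a b)
        simpa [ha, hb] using this
      · have := le_of_abs_le (abs_real_inner_le_norm a b)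
        simpa [ha, hb] using this
    have hfab := hsum _ hab
    rw [lp.inner_eq_tsum]
    have : (fun k => (inner ℝ ((C a : lp E 2) k) ((C b : lp E 2) k) : ℝ))
        = fun k => d k * (inner ℝ a b : ℝ) ^ k := by
      funext k
      simp only [hC, dif_pos ha, dif_pos hb]
      show (inner ℝ (x a k) (x b k) : ℝ) = _
      simp only [hx, real_inner_smul_left, real_inner_smul_right, inner_tpow]
      rw [← mul_assoc, Real.mul_self_sqrt (hd k)]
      congr 1
      exact inner_tpow n k a b
    rw [this]
    exact hfab.tsum_eq
  intro a b ha hb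
  refine ⟨?_, key a b ha hb⟩
  have h1 : (inner ℝ (C a) (C a) : ℝ) = 1 := by
    rw [key a a ha ha, real_inner_self_eq_norm_sq, ha]
    norm_num [hf1]
  have h2 : ‖C a‖ ^ 2 = 1 := by rw [← real_inner_self_eq_norm_sq, h1]
  nlinarith [norm_nonneg (C a)]
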